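/- Let e ∈ V be a null vector, let m be a nonzero real number, and let E₁, E₂ ∈ V satisfy B(E₁,e) = B(E₂,e) = m and B(E₁,E₁) = B(E₂,E₂). Set x = (1/m)·(E₂ − E₁). Then B(x,e) = 0 and α_x(E₁) = E₂. -/

import Mathlib

/-- The Minkowski bilinear form of signature `(1,n)` on `ℝ^{n+1}`:
`B x y = x₀ y₀ - ∑_{i=1}^n xᵢ yᵢ`. -/
def B (n : ℕ) (x y : Fin (n + 1) → ℝ) : ℝ :=
  x 0 * y 0 - ∑ i : Fin n, x i.succ * y i.succ

/-- The strictly parabolic transformation `α_x` at a null vector `e`, for `x ⊥ e`: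
`α_x(y) = y + B(y,e)·x − (B(x,y) + (1/2)B(x,x)B(y,e))·e`. -/
noncomputable def alpha (n : ℕ) (e x y : Fin (n + 1) → ℝ) : Fin (n + 1) → ℝ :=
  y + (B n y e) • x - ((B n x y) + (1 / 2) * (B n x x) * (B n y e)) • e

lemma B_symm (n : ℕ) (x y : Fin (n + 1) → ℝ) : B n x y = B n y x := by
  simp [B, mul_comm]

lemma B_sub_left (n : ℕ) (x y z : Fin (n + 1) → ℝ) :
    B n (x - y) z = B n x z - B n y z := by
  simp only [B, Pi.sub_apply, sub_mul, Finset.sum_sub_distrib]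
  ring

lemma B_smul_left (n : ℕ) (c : ℝ) (x y : Fin (n + 1) → ℝ) :
    B n (c • x) y = c * B n x y := by
  simp only [B, Pi.smul_apply, smul_eq_mul, mul_assoc, ← Finset.mul_sum]
  ring

lemma B_smul_right (n : ℕ) (c : ℝ) (x y : Fin (n + 1) → ℝ) :
    B n x (c • y) = c * B n x y := by
  rw [B_symm, B_smul_left, B_symm]

lemma B_sub_right (n : ℕ) (x y z : Fin (n + 1) → ℝ) :
    B n x (y - z) = B n x y - B n x z := by
  rw [B_symm, B_sub_left, B_symm n x y, B_symm n x z]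

/-- If `E₁, E₂` have the same pairing `m ≠ 0` with the null vector `e` and the same
self-intersection, then the strictly parabolic transformation with parameter
`x = (1/m)(E₂ − E₁)` carries `E₁` to `E₂`. -/
theorem alpha_transitive (n : ℕ) (hn : 1 ≤ n) (e E₁ E₂ : Fin (n + 1) → ℝ) (m : ℝ)
    (he : B n e e = 0) (hm : m ≠ 0)
    (hE₁e : B n E₁ e = m) (hE₂e : B n E₂ e = m)
    (hsq : B n E₁ E₁ = B n E₂ E₂) :
    B n ((1 / m) • (E₂ - E₁)) e = 0 ∧
    alpha n e ((1 / m) • (E₂ - E₁)) E₁ = E₂ := by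
  set x : Fin (n + 1) → ℝ := (1 / m) • (E₂ - E₁) with hx
  have hxe : B n x e = 0 := by
    rw [hx, B_smul_left, B_sub_left, hE₁e, hE₂e]
    ring
  refine ⟨hxe, ?_⟩
  have h21 : B n E₂ E₁ = B n E₁ E₂ := B_symm n E₂ E₁
  have hxE₁ : B n x E₁ = (1 / m) * (B n E₂ E₁ - B n E₁ E₁) := by
    rw [hx, B_smul_left, B_sub_left]
  have hxx : B n x x = (1 / m) * ((1 / m) *
      (B n E₂ E₂ - B n E₁ E₂ - (B n E₂ E₁ - B n E₁ E₁))) := by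
    rw [hx, B_smul_left, B_smul_right, B_sub_left, B_sub_right, B_sub_right, B_symm n E₂ E₁]
  have hcoef : B n x E₁ + 1 / 2 * B n x x * B n E₁ e = 0 := by
    rw [hxE₁, hxx, hE₁e, h21, ← hsq]
    field_simp
    ring
  have hmx : (B n E₁ e) • x = E₂ - E₁ := by
    rw [hE₁e, hx, smul_smul]
    field_simp
    exact one_smul _ _
  rw [alpha, hcoef, hmx]
  simp
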